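/- Let B₃ = ⟨σ₁,σ₂⟩ be the braid group on three strands, h̃ : B₃ → SL(2,ℤ) the homomorphism with h̃(σ₁) = [[1,−1],[0,1]], h̃(σ₂) = [[1,0],[1,1]], and let U ≤ SL(2,ℤ) be the subgroup of upper-triangular matrices (i.e., matrices [[a,b],[0,d]] with ad = 1). Set θ := σ₂²σ₁σ₂². Then h̃(θ) = [[−1,−1],[0,−1]], the relation (σ₂σ₁σ₂)⁴ = (σ₁θ)² holds in B₃, and the preimage h̃^{-1}(U) equals the subgroup of B₃ generated by σ₁ and θ. -/

import Mathlib

/-- The braid relation for the braid group `B₃`. -/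
def braidRels : Set (FreeGroup (Fin 2)) :=
  {FreeGroup.of 0 * FreeGroup.of 1 * FreeGroup.of 0 *
    (FreeGroup.of 1 * FreeGroup.of 0 * FreeGroup.of 1)⁻¹}

/-- The braid group `B₃ = ⟨σ₁, σ₂ | σ₁σ₂σ₁ = σ₂σ₁σ₂⟩`. -/
abbrev BraidGroup3 := PresentedGroup braidRels

/-- The generator `σ₁` of `B₃`. -/
def sigma1 : BraidGroup3 := PresentedGroup.of 0

/-- The generator `σ₂` of `B₃`. -/
def sigma2 : BraidGroup3 := PresentedGroup.of 1

/-- The braid `θ = σ₂²σ₁σ₂²`. -/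
def theta : BraidGroup3 := sigma2 ^ 2 * sigma1 * sigma2 ^ 2

/-- The images of `σ₁`, `σ₂` in `SL(2,ℤ)`. -/
def braidImg : Fin 2 → Matrix.SpecialLinearGroup (Fin 2) ℤ :=
  ![⟨!![1, -1; 0, 1], by simp [Matrix.det_fin_two_of]⟩,
    ⟨!![1, 0; 1, 1], by simp [Matrix.det_fin_two_of]⟩]

lemma braidImg_rels : ∀ r ∈ braidRels, FreeGroup.lift braidImg r = 1 := by
  intro r hr
  rcases hr with rfl
  simp only [map_mul, map_inv, FreeGroup.lift_apply_of]
  rw [mul_inv_eq_one]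
  ext i j
  fin_cases i <;> fin_cases j <;> decide

/-- The homomorphism `h̃ : B₃ → SL(2,ℤ)`. -/
def htilde : BraidGroup3 →* Matrix.SpecialLinearGroup (Fin 2) ℤ :=
  PresentedGroup.toGroup braidImg_rels

/-- The subgroup of upper-triangular matrices in `SL(2,ℤ)`, i.e. those with
vanishing lower-left entry. -/
def upperTriangular : Subgroup (Matrix.SpecialLinearGroup (Fin 2) ℤ) where
  carrier := {x | (x : Matrix (Fin 2) (Fin 2) ℤ) 1 0 = 0}
  one_mem' := by
    simp
  mul_mem' := by
    intro a b ha hb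
    simp only [Set.mem_setOf_eq] at ha hb ⊢
    rw [Matrix.SpecialLinearGroup.coe_mul, Matrix.mul_apply, Fin.sum_univ_two]
    simp [ha, hb]
  inv_mem' := by
    intro a ha
    simp only [Set.mem_setOf_eq] at ha ⊢
    rw [Matrix.SpecialLinearGroup.coe_inv, Matrix.adjugate_fin_two]
    simp [ha]

-- basic relation
lemma braid_rel : sigma1 * sigma2 * sigma1 = sigma2 * sigma1 * sigma2 := by
  have h : (PresentedGroup.mk braidRels (FreeGroup.of 0 * FreeGroup.of 1 * FreeGroup.of 0 *
      (FreeGroup.of 1 * FreeGroup.of 0 * FreeGroup.of 1)⁻¹)) = 1 := by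
    rw [← map_one (PresentedGroup.mk braidRels)]
    apply QuotientGroup.eq.mpr
    simp only [mul_one, inv_one]
    exact Subgroup.inv_mem _ (Subgroup.subset_normalClosure rfl)
  simp only [map_mul, map_inv] at h
  have h2 : sigma1 * sigma2 * sigma1 * (sigma2 * sigma1 * sigma2)⁻¹ = 1 := by
    simpa [sigma1, sigma2, PresentedGroup.of] using h
  exact mul_inv_eq_one.mp h2

def xx : BraidGroup3 := sigma1 * sigma2 * sigma1
def yy : BraidGroup3 := sigma1 * sigma2
def cc : BraidGroup3 := xx ^ 2

lemma hxy : cc = yy ^ 3 := by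
  have : cc = (sigma1 * sigma2 * sigma1) * (sigma2 * sigma1 * sigma2) := by
    rw [cc, sq, xx]; rw [braid_rel]
  rw [this, yy]; simp only [pow_succ, pow_zero, one_mul]; group

example : True := trivial

lemma hc_eq : sigma1 * theta = cc := by
  have h1 : sigma1 * theta = sigma1 * sigma2 * (sigma2 * sigma1 * sigma2) * sigma2 := by
    rw [theta]; simp only [pow_succ, pow_zero, one_mul]; group
  rw [h1, ← braid_rel, hxy, yy]
  simp only [pow_succ, pow_zero, one_mul]; group

lemma hx_eq : sigma2 * sigma1 * sigma2 = xx := by rw [xx, braid_rel]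

lemma part2 : (sigma2 * sigma1 * sigma2) ^ 4 = (sigma1 * theta) ^ 2 := by
  rw [hx_eq, hc_eq, cc, ← pow_mul]

lemma comm_c_x : Commute cc xx := by rw [cc]; exact (Commute.refl xx).pow_left 2
lemma comm_c_y : Commute cc yy := by rw [hxy]; exact (Commute.refl yy).pow_left 3

lemma hs1 : sigma1 = cc⁻¹ * (yy * (yy * xx)) := by
  rw [hxy, yy, xx]; simp only [pow_succ, pow_zero, one_mul]; group
lemma hs2 : sigma2 = cc⁻¹ * (xx * (yy * yy)) := by
  rw [cc, xx, yy]; simp only [pow_succ, pow_zero, one_mul]; group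
lemma hs1i : sigma1⁻¹ = cc⁻¹ * (xx * yy) := by
  rw [cc, xx, yy]; simp only [pow_succ, pow_zero, one_mul]; group
lemma hs2i : sigma2⁻¹ = cc⁻¹ * (yy * xx) := by
  rw [hxy, xx, yy]; simp only [pow_succ, pow_zero, one_mul]; group

inductive BL : Type
  | A : BL
  | B1 : BL
  | B2 : BL
deriving DecidableEq

open BL

def clsB : BL → Bool
  | A => false
  | B1 => true
  | B2 => true

def Alt (l : List BL) : Prop := l.Chain' (fun p q => clsB p ≠ clsB q)

def letterB : BL → BraidGroup3
  | A => xx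
  | B1 => yy
  | B2 => yy * yy

def evalB (l : List BL) : BraidGroup3 := (l.map letterB).prod

@[simp] lemma evalB_nil : evalB [] = 1 := rfl
lemma evalB_cons (p : BL) (l : List BL) : evalB (p :: l) = letterB p * evalB l := by
  simp [evalB]
lemma evalB_append (l₁ l₂ : List BL) : evalB (l₁ ++ l₂) = evalB l₁ * evalB l₂ := by
  simp [evalB]

lemma comm_c_eval (l : List BL) : Commute cc (evalB l) := by
  induction l with
  | nil => simp [evalB]
  | cons p r ih =>
      rw [evalB_cons]
      refine Commute.mul_right ?_ ih
      cases p
      · exact comm_c_x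
      · exact comm_c_y
      · exact Commute.mul_right comm_c_y comm_c_y

def PredNF (g : BraidGroup3) : Prop := ∃ (k : ℤ) (l : List BL), Alt l ∧ g = cc ^ k * evalB l

lemma PredNF_one : PredNF 1 := ⟨0, [], List.isChain_nil, by simp⟩

lemma PredNF_c (j : ℤ) {h : BraidGroup3} (hh : PredNF h) : PredNF (cc ^ j * h) := by
  obtain ⟨k, l, hl, rfl⟩ := hh
  exact ⟨j + k, l, hl, by rw [← mul_assoc, ← zpow_add]⟩

lemma PredNF_x {h : BraidGroup3} (hh : PredNF h) : PredNF (xx * h) := by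
  obtain ⟨k, l, hl, rfl⟩ := hh
  have hcom : xx * (cc ^ k * evalB l) = cc ^ k * (xx * evalB l) := by
    rw [← mul_assoc, ← mul_assoc, ((comm_c_x.symm).zpow_right k).eq]
  rw [hcom]
  cases l with
  | nil => exact ⟨k, [A], List.isChain_singleton _, by simp [evalB_cons, letterB]⟩
  | cons p r =>
      cases p with
      | A =>
          refine ⟨k + 1, r, hl.tail, ?_⟩
          have hcc : cc = xx * xx := by rw [cc, sq]
          rw [evalB_cons, letterB, zpow_add, zpow_one, hcc]
          simp only [mul_assoc]
      | B1 =>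
          refine ⟨k, A :: B1 :: r, List.isChain_cons_cons.mpr ⟨by decide, hl⟩, ?_⟩
          rw [evalB_cons (A), letterB]
      | B2 =>
          refine ⟨k, A :: B2 :: r, List.isChain_cons_cons.mpr ⟨by decide, hl⟩, ?_⟩
          rw [evalB_cons (A), letterB]

lemma PredNF_y {h : BraidGroup3} (hh : PredNF h) : PredNF (yy * h) := by
  obtain ⟨k, l, hl, rfl⟩ := hh
  have hcom : yy * (cc ^ k * evalB l) = cc ^ k * (yy * evalB l) := by
    rw [← mul_assoc, ← mul_assoc, ((comm_c_y.symm).zpow_right k).eq]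
  rw [hcom]
  cases l with
  | nil => exact ⟨k, [B1], List.isChain_singleton _, by simp [evalB_cons, letterB]⟩
  | cons p r =>
      cases p with
      | A =>
          refine ⟨k, B1 :: A :: r, List.isChain_cons_cons.mpr ⟨by decide, hl⟩, ?_⟩
          rw [evalB_cons (B1), letterB]
      | B1 =>
          refine ⟨k, B2 :: r, ?_, ?_⟩
          · cases r with
            | nil => exact List.isChain_singleton _
            | cons q t =>
                have := List.isChain_cons_cons.mp hl
                exact List.isChain_cons_cons.mpr ⟨by
                  have h1 := this.1
                  cases q <;> simp_all [clsB], this.2⟩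
          · rw [evalB_cons, evalB_cons, letterB, letterB]
            simp only [mul_assoc]
      | B2 =>
          refine ⟨k + 1, r, hl.tail, ?_⟩
          rw [evalB_cons, letterB, hxy, zpow_add, zpow_one]
          simp only [pow_succ, pow_zero, one_mul, mul_assoc]

lemma PredNF_gen {h : BraidGroup3} (hh : PredNF h) :
    PredNF (sigma1 * h) ∧ PredNF (sigma2 * h) ∧ PredNF (sigma1⁻¹ * h) ∧ PredNF (sigma2⁻¹ * h) := by
  have hc1 : ∀ {g}, PredNF g → PredNF (cc⁻¹ * g) := by
    intro g hg
    have := PredNF_c (-1) hg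
    rwa [zpow_neg_one] at this
  refine ⟨?_, ?_, ?_, ?_⟩
  · rw [hs1, mul_assoc, mul_assoc, mul_assoc]
    exact hc1 (PredNF_y (PredNF_y (PredNF_x hh)))
  · rw [hs2, mul_assoc, mul_assoc, mul_assoc]
    exact hc1 (PredNF_x (PredNF_y (PredNF_y hh)))
  · rw [hs1i, mul_assoc, mul_assoc]
    exact hc1 (PredNF_x (PredNF_y hh))
  · rw [hs2i, mul_assoc, mul_assoc]
    exact hc1 (PredNF_y (PredNF_x hh))

lemma PredNF_all (g : BraidGroup3) : PredNF g := by
  have htop : Subgroup.closure ({sigma1, sigma2} : Set BraidGroup3) = ⊤ := by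
    have := PresentedGroup.closure_range_of braidRels
    have hr : Set.range (PresentedGroup.of : Fin 2 → BraidGroup3) = {sigma1, sigma2} := by
      ext g
      constructor
      · rintro ⟨i, rfl⟩
        fin_cases i
        · exact Or.inl rfl
        · exact Or.inr rfl
      · rintro (rfl | rfl)
        exacts [⟨0, rfl⟩, ⟨1, rfl⟩]
    rwa [hr] at this
  set K : Submonoid BraidGroup3 :=
    { carrier := {g | ∀ h, PredNF h → PredNF (g * h)}
      one_mem' := by intro h hh; simpa using hh
      mul_mem' := by
        intro a b ha hb h hh
        rw [mul_assoc]
        exact ha _ (hb _ hh) } with hK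
  have hsub : ({sigma1, sigma2} : Set BraidGroup3) ∪ ({sigma1, sigma2} : Set BraidGroup3)⁻¹ ⊆ K := by
    rintro s (hs | hs)
    · rcases hs with rfl | rfl
      · exact fun h hh => (PredNF_gen hh).1
      · exact fun h hh => (PredNF_gen hh).2.1
    · rcases hs with h | h
      · have hs' : s = sigma1⁻¹ := by rw [← h, inv_inv]
        subst hs'
        exact fun h hh => (PredNF_gen hh).2.2.1
      · have hs' : s = sigma2⁻¹ := by rw [← h, inv_inv]
        subst hs'
        exact fun h hh => (PredNF_gen hh).2.2.2
  have hmem : g ∈ Submonoid.closure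
      (({sigma1, sigma2} : Set BraidGroup3) ∪ ({sigma1, sigma2} : Set BraidGroup3)⁻¹) := by
    rw [← Subgroup.closure_toSubmonoid, htop]
    exact Subgroup.mem_top g
  have := (Submonoid.closure_le.mpr hsub) hmem
  have h1 := this 1 PredNF_one
  simpa using h1

-- Möbius machinery
noncomputable def muM (M : Matrix (Fin 2) (Fin 2) ℤ) (z : ℝ) : ℝ :=
  ((M 0 0 : ℝ) * z + (M 0 1)) / ((M 1 0 : ℝ) * z + (M 1 1))

lemma denom_ne {M : Matrix (Fin 2) (Fin 2) ℤ} (hdet : M.det ≠ 0) {z : ℝ}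
    (hz : Irrational z) : (M 1 0 : ℝ) * z + (M 1 1) ≠ 0 := by
  by_cases hc : M 1 0 = 0
  · have hd : M 1 1 ≠ 0 := by
      intro hd
      rw [Matrix.det_fin_two, hc, hd] at hdet
      simp at hdet
    simp [hc]
    exact_mod_cast hd
  · intro h0
    apply hz
    refine ⟨(-(M 1 1 : ℚ)) / (M 1 0 : ℚ), ?_⟩
    have hcR : (M 1 0 : ℝ) ≠ 0 := Int.cast_ne_zero.mpr hc
    push_cast
    field_simp
    linarith [h0]

lemma muM_irrational {M : Matrix (Fin 2) (Fin 2) ℤ} (hdet : M.det ≠ 0) {z : ℝ}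
    (hz : Irrational z) : Irrational (muM M z) := by
  rintro ⟨q, hq⟩
  have hden := denom_ne hdet hz
  rw [muM] at hq
  have h1 : (M 0 0 : ℝ) * z + (M 0 1) = q * ((M 1 0 : ℝ) * z + (M 1 1)) := by
    rw [eq_div_iff hden] at hq
    linarith [hq]
  have h2 : ((M 0 0 : ℝ) - q * M 1 0) * z = q * M 1 1 - M 0 1 := by ring_nf; linarith [h1]
  by_cases hcase : (M 0 0 : ℝ) - q * M 1 0 = 0
  · -- then det = 0
    have hb : (q : ℝ) * M 1 1 - M 0 1 = 0 := by rw [← h2, hcase, zero_mul]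
    have hdet' : (M.det : ℝ) = 0 := by
      rw [Matrix.det_fin_two]
      push_cast
      have e1 : (M 0 0 : ℝ) = q * M 1 0 := by linarith [hcase]
      have e2 : (M 0 1 : ℝ) = q * M 1 1 := by linarith [hb]
      rw [e1, e2]; ring
    exact hdet (by exact_mod_cast hdet')
  · apply hz
    refine ⟨((q : ℚ) * M 1 1 - M 0 1) / ((M 0 0 : ℚ) - q * M 1 0), ?_⟩
    have : z = ((q : ℝ) * M 1 1 - M 0 1) / ((M 0 0 : ℝ) - q * M 1 0) := by
      field_simp
      linarith [h2]
    rw [this]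
    push_cast
    ring
lemma muM_mul {M N : Matrix (Fin 2) (Fin 2) ℤ} (hM : M.det ≠ 0) (hN : N.det ≠ 0) {z : ℝ}
    (hz : Irrational z) : muM (M * N) z = muM M (muM N z) := by
  have hdN := denom_ne hN hz
  have hw : Irrational (muM N z) := muM_irrational hN hz
  have hdM : (M 1 0 : ℝ) * (muM N z) + (M 1 1) ≠ 0 := denom_ne hM hw
  have hdMN : ((M * N) 1 0 : ℝ) * z + ((M * N) 1 1) ≠ 0 :=
    denom_ne (by rw [Matrix.det_mul]; exact mul_ne_zero hM hN) hz
  simp only [muM, Matrix.mul_apply, Fin.sum_univ_two] at hdM hdMN hdN ⊢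
  push_cast at hdM hdMN hdN ⊢
  set P : ℝ := (N 0 0 : ℝ) * z + N 0 1 with hPdef
  set Q : ℝ := (N 1 0 : ℝ) * z + N 1 1 with hQdef
  have hy : (M 1 0 : ℝ) * P + (M 1 1) * Q ≠ 0 := by
    have he : (M 1 0 : ℝ) * P + M 1 1 * Q = ((M 1 0 : ℝ) * (P / Q) + M 1 1) * Q := by
      field_simp
    rw [he]
    exact mul_ne_zero hdM hdN
  have hRHS : ((M 0 0 : ℝ) * (P / Q) + M 0 1) / ((M 1 0 : ℝ) * (P / Q) + M 1 1)
      = ((M 0 0 : ℝ) * P + M 0 1 * Q) / ((M 1 0 : ℝ) * P + M 1 1 * Q) := by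
    rw [div_eq_div_iff hdM hy]
    field_simp
  rw [hRHS, div_eq_div_iff hdMN hy, hPdef, hQdef]
  ring

def letterM : BL → Matrix (Fin 2) (Fin 2) ℤ
  | A => !![0, -1; 1, 0]
  | B1 => !![0, -1; 1, 1]
  | B2 => !![-1, -1; 1, 0]

def evalM (l : List BL) : Matrix (Fin 2) (Fin 2) ℤ := (l.map letterM).prod

@[simp] lemma evalM_nil : evalM [] = 1 := rfl
lemma evalM_cons (p : BL) (l : List BL) : evalM (p :: l) = letterM p * evalM l := by
  simp [evalM]

lemma letterM_det (p : BL) : (letterM p).det = 1 := by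
  cases p <;> (rw [ Matrix.det_fin_two]; decide)

lemma evalM_det (l : List BL) : (evalM l).det = 1 := by
  induction l with
  | nil => simp
  | cons p r ih => rw [evalM_cons, Matrix.det_mul, letterM_det, ih, one_mul]

-- values of htilde
lemma htilde_s1 : (htilde sigma1 : Matrix (Fin 2) (Fin 2) ℤ) = !![1, -1; 0, 1] := by
  rw [sigma1, htilde, PresentedGroup.toGroup.of]
  rfl

lemma htilde_s2 : (htilde sigma2 : Matrix (Fin 2) (Fin 2) ℤ) = !![1, 0; 1, 1] := by
  rw [sigma2, htilde, PresentedGroup.toGroup.of]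
  rfl

lemma htilde_xx : (htilde xx : Matrix (Fin 2) (Fin 2) ℤ) = !![0, -1; 1, 0] := by
  rw [xx, map_mul, map_mul, Matrix.SpecialLinearGroup.coe_mul, Matrix.SpecialLinearGroup.coe_mul,
    htilde_s1, htilde_s2]
  ext i j
  fin_cases i <;> fin_cases j <;> simp [Matrix.mul_apply, Fin.sum_univ_two]

lemma htilde_yy : (htilde yy : Matrix (Fin 2) (Fin 2) ℤ) = !![0, -1; 1, 1] := by
  rw [yy, map_mul, Matrix.SpecialLinearGroup.coe_mul, htilde_s1, htilde_s2]
  ext i j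
  fin_cases i <;> fin_cases j <;> simp [Matrix.mul_apply, Fin.sum_univ_two]

lemma htilde_eval (l : List BL) : (htilde (evalB l) : Matrix (Fin 2) (Fin 2) ℤ) = evalM l := by
  induction l with
  | nil => simp [evalB, evalM]
  | cons p r ih =>
      rw [evalB_cons, evalM_cons, map_mul, Matrix.SpecialLinearGroup.coe_mul, ih]
      congr 1
      cases p
      · exact htilde_xx
      · exact htilde_yy
      · rw [letterB, map_mul, Matrix.SpecialLinearGroup.coe_mul, htilde_yy, letterM]
        ext i j
        fin_cases i <;> fin_cases j <;> simp [Matrix.mul_apply, Fin.sum_univ_two]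

lemma htilde_cc : (htilde cc : Matrix (Fin 2) (Fin 2) ℤ) = -1 := by
  rw [cc, map_pow, sq, Matrix.SpecialLinearGroup.coe_mul, htilde_xx]
  ext i j
  fin_cases i <;> fin_cases j <;> simp [Matrix.mul_apply, Fin.sum_univ_two]

lemma htilde_cc_pow (k : ℤ) : (htilde (cc ^ k) : Matrix (Fin 2) (Fin 2) ℤ) = 1 ∨
    (htilde (cc ^ k) : Matrix (Fin 2) (Fin 2) ℤ) = -1 := by
  have hsq : htilde cc * htilde cc = 1 := by
    ext i j
    rw [Matrix.SpecialLinearGroup.coe_mul, htilde_cc]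
    fin_cases i <;> fin_cases j <;> simp
  rcases Int.even_or_odd k with ⟨m, hm⟩ | ⟨m, hm⟩
  · left
    rw [map_zpow, hm, ← two_mul, zpow_mul, show (htilde cc) ^ (2:ℤ) = 1 by rw [zpow_two]; exact hsq,
      one_zpow]
    rfl
  · right
    rw [map_zpow, hm, zpow_add, zpow_mul, show (htilde cc) ^ (2:ℤ) = 1 by rw [zpow_two]; exact hsq,
      one_zpow, one_mul, zpow_one, htilde_cc]

def outS (p : BL) (z : ℝ) : Prop := if clsB p then z < 0 else 0 < z
def inS (p : BL) (z : ℝ) : Prop := if clsB p then 0 < z else z < 0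

lemma opp_step {p q : BL} (h : clsB p ≠ clsB q) {w : ℝ} (hw : outS q w) : inS p w := by
  cases hp : clsB p <;> cases hq : clsB q <;> simp_all [outS, inS]

lemma mob_step (p : BL) {z : ℝ} (hz : Irrational z) (hin : inS p z) :
    Irrational (muM (letterM p) z) ∧ outS p (muM (letterM p) z) := by
  refine ⟨muM_irrational (by rw [letterM_det p]; norm_num) hz, ?_⟩
  cases p with
  | A =>
      have hin' : z < 0 := by simpa [inS, clsB] using hin
      have he : muM (letterM A) z = (-1) / z := by rw [muM]; norm_num [letterM]
      have : (0:ℝ) < (-1) / z := div_pos_of_neg_of_neg (by norm_num) hin'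
      simpa [outS, clsB, he] using this
  | B1 =>
      have hin' : 0 < z := by simpa [inS, clsB] using hin
      have he : muM (letterM B1) z = (-1) / (z + 1) := by rw [muM]; norm_num [letterM]
      have : (-1 : ℝ) / (z + 1) < 0 := div_neg_of_neg_of_pos (by norm_num) (by linarith)
      simpa [outS, clsB, he] using this
  | B2 =>
      have hin' : 0 < z := by simpa [inS, clsB] using hin
      have he : muM (letterM B2) z = (-z + -1) / z := by rw [muM]; norm_num [letterM]
      have : (-z + -1 : ℝ) / z < 0 := div_neg_of_neg_of_pos (by linarith) hin'
      simpa [outS, clsB, he] using this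

lemma muM_one {z : ℝ} : muM 1 z = z := by
  rw [muM]
  norm_num [Matrix.one_apply]

lemma muM_neg_one {z : ℝ} : muM (-1) z = z := by
  rw [muM]
  norm_num [Matrix.one_apply]

lemma pingpong : ∀ (l : List BL), Alt l → ∀ z : ℝ, Irrational z → ∀ (hne : l ≠ []),
    inS (l.getLast hne) z →
    Irrational (muM (evalM l) z) ∧ outS (l.head hne) (muM (evalM l) z) := by
  intro l
  induction l with
  | nil => intro _ z _ hne; exact absurd rfl hne
  | cons p r ih =>
      intro hl z hz hne hin
      cases r with
      | nil =>
          have h1 : muM (evalM [p]) z = muM (letterM p) z := by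
            rw [evalM_cons, evalM_nil, mul_one]
          rw [List.head_cons, h1]
          exact mob_step p hz (by simpa [List.getLast_singleton] using hin)
      | cons q t =>
          have hl' : Alt (q :: t) := (List.isChain_cons_cons.mp hl).2
          have hpq : clsB p ≠ clsB q := (List.isChain_cons_cons.mp hl).1
          have hin' : inS ((q :: t).getLast (List.cons_ne_nil q t)) z := by
            rwa [List.getLast_cons (List.cons_ne_nil q t)] at hin
          obtain ⟨hirr, hout⟩ := ih hl' z hz (List.cons_ne_nil q t) hin'
          have hmul : muM (evalM (p :: q :: t)) z = muM (letterM p) (muM (evalM (q :: t)) z) := by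
            rw [evalM_cons]
            exact muM_mul (by rw [letterM_det]; norm_num) (by rw [evalM_det]; norm_num) hz
          have hstep := mob_step p hirr (opp_step hpq (by simpa using hout))
          rw [List.head_cons, hmul]
          exact hstep

lemma no_pure (l : List BL) (hl : Alt l) (hne : l ≠ [])
    (hcls : clsB (l.head hne) = clsB (l.getLast hne)) (k : ℤ)
    (hker : htilde (cc ^ k * evalB l) = 1) : False := by
  have heval : evalM l = 1 ∨ evalM l = -1 := by
    have h1 : (htilde (cc ^ k) : Matrix (Fin 2) (Fin 2) ℤ) * evalM l = 1 := by
      rw [← htilde_eval, ← Matrix.SpecialLinearGroup.coe_mul, ← map_mul, hker]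
      rfl
    rcases htilde_cc_pow k with h | h
    · left; rwa [h, one_mul] at h1
    · right
      rw [h, neg_one_mul, neg_eq_iff_eq_neg] at h1
      rw [h1]
  have hfix : ∀ z : ℝ, muM (evalM l) z = z := by
    intro z
    rcases heval with h | h <;> rw [h]
    · exact muM_one
    · exact muM_neg_one
  cases hcl : clsB (l.getLast hne) with
  | true =>
      have h2 : Irrational (Real.sqrt 2) := irrational_sqrt_two
      have := (pingpong l hl _ h2 hne (by
        rw [inS, hcl, if_pos rfl]
        exact Real.sqrt_pos.mpr (by norm_num))).2
      rw [hfix] at this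
      rw [outS, hcls, hcl, if_pos rfl] at this
      have h3 : (0:ℝ) < Real.sqrt 2 := Real.sqrt_pos.mpr (by norm_num)
      linarith
  | false =>
      have h2 : Irrational (-Real.sqrt 2) := irrational_sqrt_two.neg
      have := (pingpong l hl _ h2 hne (by
        rw [inS, hcl]
        simp only [Bool.false_eq_true, if_false]
        have h3 : (0:ℝ) < Real.sqrt 2 := Real.sqrt_pos.mpr (by norm_num)
        linarith)).2
      rw [hfix] at this
      rw [outS, hcls, hcl] at this
      simp only [Bool.false_eq_true, if_false] at this
      have h3 : (0:ℝ) < Real.sqrt 2 := Real.sqrt_pos.mpr (by norm_num)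
      linarith

lemma conj_nf (u W v v' : BraidGroup3) (k j : ℤ) (hu : Commute cc u) (hW : Commute cc W)
    (hv : v * u⁻¹ = cc ^ j * v') :
    u * (cc ^ k * (W * v)) * u⁻¹ = cc ^ (k + j) * (u * (W * v')) := by
  have h1 : Commute (cc ^ k) u := (hu.zpow_left k)
  have h3 : Commute (cc ^ j) W := hW.zpow_left j
  have h2 : Commute (cc ^ j) u := hu.zpow_left j
  calc u * (cc ^ k * (W * v)) * u⁻¹
      = (u * cc ^ k) * (W * (v * u⁻¹)) := by simp [mul_assoc]
    _ = (cc ^ k * u) * (W * (cc ^ j * v')) := by rw [h1.eq, hv]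
    _ = cc ^ k * (u * ((cc ^ j * W) * v')) := by rw [h3.eq]; simp [mul_assoc]
    _ = cc ^ k * ((u * cc ^ j) * (W * v')) := by simp [mul_assoc]
    _ = cc ^ (k + j) * (u * (W * v')) := by rw [← h2.eq, zpow_add]; simp [mul_assoc]

lemma alt_decomp {m : List BL} {q : BL} (h : Alt ((A :: m) ++ [q])) :
    Alt (A :: m) ∧ clsB ((A :: m).getLast (List.cons_ne_nil _ _)) ≠ clsB q := by
  rw [Alt, List.Chain', List.isChain_append] at h
  obtain ⟨h1, _, h3⟩ := h
  refine ⟨h1, ?_⟩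
  have := h3 _ (by
    rw [List.getLast?_eq_getLast_of_ne_nil (List.cons_ne_nil A m)]
    rfl) q rfl
  exact this

lemma no_mixedAB (m : List BL) (q : BL) (hq : clsB q = true) (h : Alt (A :: m ++ [q])) (k : ℤ)
    (hker : htilde (cc ^ k * evalB (A :: m ++ [q])) = 1) : False := by
  have h' : Alt ((A :: m) ++ [q]) := h
  obtain ⟨hAm, hlast⟩ := alt_decomp h'
  -- choose letters
  obtain ⟨q', j, hv⟩ : ∃ (q' : BL) (j : ℤ),
      letterB q * (letterB q')⁻¹ = cc ^ j * letterB q' ∧ clsB q' = true := by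
    cases q with
    | A => simp [clsB] at hq
    | B1 =>
        refine ⟨B2, -1, ?_, rfl⟩
        rw [letterB, letterB, hxy]
        group
    | B2 =>
        refine ⟨B1, 0, ?_, rfl⟩
        rw [letterB, letterB]
        group
  obtain ⟨hv, hq' ⟩ := hv
  set W : BraidGroup3 := evalB (A :: m) with hW
  have hevall : evalB ((A :: m) ++ [q]) = W * letterB q := by
    rw [evalB_append, ← hW, evalB_cons, evalB_nil, mul_one]
  set l'' : List BL := (q' :: (A :: m)) ++ [q'] with hl''
  have hq1 : evalB [q'] = letterB q' := by rw [evalB_cons, evalB_nil, mul_one]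
  have heval'' : evalB l'' = letterB q' * (W * letterB q') := by
    rw [hl'', evalB_append, hq1, evalB_cons, ← hW, mul_assoc]
  have hconj := conj_nf (letterB q') W (letterB q) (letterB q') k j
    (by cases q' with
        | A => simp [clsB] at hq'
        | B1 => exact comm_c_y
        | B2 => exact Commute.mul_right comm_c_y comm_c_y)
    (comm_c_eval _) hv
  rw [hevall] at hker
  have hker'' : htilde (cc ^ (k + j) * evalB l'') = 1 := by
    rw [heval'', ← hconj, map_mul, map_mul, hker, mul_one, map_inv, mul_inv_cancel]
  have halt'' : Alt l'' := by
    rw [hl'', Alt, List.Chain', List.isChain_append]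
    refine ⟨List.isChain_cons_cons.mpr ⟨by rw [hq']; decide, hAm⟩, List.isChain_singleton _, ?_⟩
    intro x hx y hy
    rw [List.getLast?_eq_getLast_of_ne_nil (List.cons_ne_nil q' (A :: m))] at hx
    simp only [Option.mem_def, Option.some.injEq, List.head?_cons] at hx hy
    subst hx
    subst hy
    rw [List.getLast_cons (List.cons_ne_nil A m)]
    intro hcon
    apply hlast
    rw [hcon, hq', hq]
  have hne'' : l'' ≠ [] := by simp [hl'']
  apply no_pure l'' halt'' hne'' ?_ (k + j) hker''
  have hhead : l''.head hne'' = q' := rfl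
  have hlast'' : l''.getLast hne'' = q' :=
    (List.getLast_append_of_ne_nil _ (List.cons_ne_nil q' [])).trans rfl
  rw [hhead, hlast'']

lemma no_mixedBA (p : BL) (m : List BL) (hp : clsB p = true) (h : Alt ((p :: m) ++ [A])) (k : ℤ)
    (hker : htilde (cc ^ k * evalB ((p :: m) ++ [A])) = 1) : False := by
  have hpm : Alt (p :: m) ∧ clsB ((p :: m).getLast (List.cons_ne_nil _ _)) ≠ clsB A := by
    rw [Alt, List.Chain', List.isChain_append] at h
    obtain ⟨h1, _, h3⟩ := h
    exact ⟨h1, h3 _ (by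
      rw [List.getLast?_eq_getLast_of_ne_nil (List.cons_ne_nil p m)]
      rfl) A rfl⟩
  obtain ⟨hAm, hlast⟩ := hpm
  set W : BraidGroup3 := evalB (p :: m) with hW
  have hevall : evalB ((p :: m) ++ [A]) = W * letterB A := by
    rw [evalB_append, ← hW, evalB_cons, evalB_nil, mul_one]
  rw [hevall] at hker
  have hconj := conj_nf xx W (letterB A) 1 k 0 comm_c_x (comm_c_eval _)
    (by rw [letterB]; group)
  rw [add_zero] at hconj
  have hker₂ : htilde (cc ^ k * evalB (A :: p :: m)) = 1 := by
    have he2 : evalB (A :: p :: m) = xx * (W * 1) := by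
      rw [evalB_cons, letterB, ← hW, mul_one]
    rw [he2, ← hconj, map_mul, map_mul, hker, mul_one, map_inv, mul_inv_cancel]
  rcases List.eq_nil_or_concat (p :: m) with hnil | ⟨m', q, hconcat⟩
  · exact absurd hnil (List.cons_ne_nil p m)
  · have hAlt2 : Alt (A :: p :: m) := List.isChain_cons_cons.mpr ⟨by rw [hp]; decide, hAm⟩
    have hcq : p :: m = m' ++ [q] := by rw [hconcat, List.concat_eq_append]
    have h6 : (p :: m).getLast? = some q := by
      rw [hconcat, List.concat_eq_append]
      exact List.getLast?_concat
    have h7 := List.getLast?_eq_getLast_of_ne_nil (List.cons_ne_nil p m)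
    rw [h7] at h6
    have h8 : (p :: m).getLast (List.cons_ne_nil p m) = q := Option.some.inj h6
    have hq : clsB q = true := by
      rw [← h8]
      exact Bool.ne_false_iff.mp (by simpa [clsB] using hlast)
    apply no_mixedAB m' q hq ?_ k ?_
    · show Alt (A :: (m' ++ [q]))
      rw [← hcq]
      exact hAlt2
    · show htilde (cc ^ k * evalB (A :: (m' ++ [q]))) = 1
      rw [← hcq]
      exact hker₂

lemma no_nonempty (l : List BL) (hl : Alt l) (hne : l ≠ []) (k : ℤ)
    (hker : htilde (cc ^ k * evalB l) = 1) : False := by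
  cases l with
  | nil => exact hne rfl
  | cons p r =>
      rcases List.eq_nil_or_concat r with rfl | ⟨m, q, hconcat⟩
      · exact no_pure [p] hl (List.cons_ne_nil p []) rfl k hker
      · have hcq : p :: r = (p :: m) ++ [q] := by
          rw [hconcat, List.concat_eq_append, List.cons_append]
        by_cases hpq : clsB p = clsB q
        · apply no_pure (p :: r) hl hne ?_ k hker
          have hh : (p :: r).head hne = p := rfl
          have hlast : (p :: r).getLast hne = q := by
            have h6 : (p :: r).getLast? = some q := by
              rw [hcq]
              exact List.getLast?_concat
            rw [List.getLast?_eq_getLast_of_ne_nil hne] at h6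
            exact Option.some.inj h6
          rw [hh, hlast]
          exact hpq
        · cases hp : clsB p with
          | false =>
              have hpA : p = A := by cases p <;> simp_all [clsB]
              have hq : clsB q = true := by
                rw [hp] at hpq
                exact Bool.ne_false_iff.mp (fun hcon => hpq (by rw [hcon]))
              subst hpA
              apply no_mixedAB (m) q hq ?_ k ?_
              · have hr : r = m ++ [q] := by rw [hconcat, List.concat_eq_append]
                show Alt (A :: (m ++ [q]))
                rw [← hr]
                exact hl
              · have : r = m ++ [q] := by rw [hconcat, List.concat_eq_append]
                show htilde (cc ^ k * evalB (A :: (m ++ [q]))) = 1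
                rw [← this]
                exact hker
          | true =>
              have hq : clsB q = false := by
                rw [hp] at hpq
                cases hcq2 : clsB q with
                | false => rfl
                | true => exact absurd (by rw [hcq2]) hpq
              have hqA : q = A := by cases q <;> simp_all [clsB]
              subst hqA
              apply no_mixedBA p m hp ?_ k ?_
              · have hr : r = m ++ [A] := by rw [hconcat, List.concat_eq_append]
                show Alt (p :: (m ++ [A]))
                rw [← hr]
                exact hl
              · have : r = m ++ [A] := by rw [hconcat, List.concat_eq_append]
                show htilde (cc ^ k * evalB (p :: (m ++ [A]))) = 1
                rw [← this]
                exact hker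

lemma ker_sub (g : BraidGroup3) (hg : htilde g = 1) :
    g ∈ Subgroup.closure ({sigma1, theta} : Set BraidGroup3) := by
  obtain ⟨k, l, hl, rfl⟩ := PredNF_all g
  have hcmem : cc ∈ Subgroup.closure ({sigma1, theta} : Set BraidGroup3) := by
    rw [← hc_eq]
    exact Subgroup.mul_mem _ (Subgroup.subset_closure (Or.inl rfl))
      (Subgroup.subset_closure (Or.inr rfl))
  rcases eq_or_ne l [] with rfl | hne
  · simpa using Subgroup.zpow_mem _ hcmem k
  · exact absurd hg (fun hker => no_nonempty l hl hne k hker)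


lemma mem_ut (x : Matrix.SpecialLinearGroup (Fin 2) ℤ) :
    x ∈ upperTriangular ↔ ((x : Matrix.SpecialLinearGroup (Fin 2) ℤ) :
      Matrix (Fin 2) (Fin 2) ℤ) 1 0 = 0 := Iff.rfl

lemma htilde_s1_zpow (n : ℤ) :
    (htilde (sigma1 ^ n) : Matrix (Fin 2) (Fin 2) ℤ) = !![1, -n; 0, 1] := by
  induction n using Int.induction_on with
  | zero => ext i j; fin_cases i <;> fin_cases j <;> simp
  | succ k ih =>
      rw [zpow_add, zpow_one, map_mul, Matrix.SpecialLinearGroup.coe_mul, ih, htilde_s1]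
      ext i j
      fin_cases i <;> fin_cases j <;>
        simp [Matrix.mul_apply, Fin.sum_univ_two] <;> ring
  | pred k ih =>
      rw [sub_eq_add_neg, zpow_add, map_mul, Matrix.SpecialLinearGroup.coe_mul, ih]
      have hinv : (htilde (sigma1 ^ (-1:ℤ)) : Matrix (Fin 2) (Fin 2) ℤ) = !![1, 1; 0, 1] := by
        have h1 : sigma1 ^ (-1:ℤ) = sigma1⁻¹ := by group
        rw [h1, map_inv, Matrix.SpecialLinearGroup.coe_inv, Matrix.adjugate_fin_two, htilde_s1]
        ext i j
        fin_cases i <;> fin_cases j <;> simp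
      rw [hinv]
      ext i j
      fin_cases i <;> fin_cases j <;>
        simp [Matrix.mul_apply, Fin.sum_univ_two] <;> ring

lemma htilde_theta : (htilde theta : Matrix (Fin 2) (Fin 2) ℤ) = !![-1, -1; 0, -1] := by
  have h1 : theta = sigma1⁻¹ * cc := by
    rw [← hc_eq, ← mul_assoc, inv_mul_cancel, one_mul]
  rw [h1, map_mul, Matrix.SpecialLinearGroup.coe_mul, map_inv,
    Matrix.SpecialLinearGroup.coe_inv, Matrix.adjugate_fin_two, htilde_s1, htilde_cc]
  ext i j
  fin_cases i <;> fin_cases j <;> simp [Matrix.mul_apply, Fin.sum_univ_two]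


/-- `h̃(θ) = [[-1,-1],[0,-1]]`; the relation `(σ₂σ₁σ₂)⁴ = (σ₁θ)²` holds in `B₃`;
and the preimage under `h̃` of the upper-triangular subgroup of `SL(2,ℤ)` is the
subgroup of `B₃` generated by `σ₁` and `θ`. -/
theorem preimage_upper_triangular :
    ((htilde theta : Matrix.SpecialLinearGroup (Fin 2) ℤ) :
        Matrix (Fin 2) (Fin 2) ℤ) = !![-1, -1; 0, -1]
    ∧ (sigma2 * sigma1 * sigma2) ^ 4 = (sigma1 * theta) ^ 2
    ∧ Subgroup.comap htilde upperTriangular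
        = Subgroup.closure ({sigma1, theta} : Set BraidGroup3) := by
  refine ⟨htilde_theta, part2, le_antisymm ?_ ?_⟩
  · -- comap ≤ closure
    intro g hg
    have hg0 : ((htilde g : Matrix.SpecialLinearGroup (Fin 2) ℤ) :
        Matrix (Fin 2) (Fin 2) ℤ) 1 0 = 0 := (mem_ut _).mp (Subgroup.mem_comap.mp hg)
    set M : Matrix (Fin 2) (Fin 2) ℤ := ((htilde g : Matrix.SpecialLinearGroup (Fin 2) ℤ) :
        Matrix (Fin 2) (Fin 2) ℤ) with hM
    have hdet : M 0 0 * M 1 1 = 1 := by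
      have hdc := Matrix.SpecialLinearGroup.det_coe (htilde g)
      have hdc2 : M.det = 1 := hdc
      rw [Matrix.det_fin_two, hg0] at hdc2
      simpa using hdc2
    have hcmem : cc ∈ Subgroup.closure ({sigma1, theta} : Set BraidGroup3) := by
      rw [← hc_eq]
      exact Subgroup.mul_mem _ (Subgroup.subset_closure (Or.inl rfl))
        (Subgroup.subset_closure (Or.inr rfl))
    have main : ∀ u : BraidGroup3,
        u ∈ Subgroup.closure ({sigma1, theta} : Set BraidGroup3) →
        (htilde u : Matrix (Fin 2) (Fin 2) ℤ) = M →
        g ∈ Subgroup.closure ({sigma1, theta} : Set BraidGroup3) := by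
      intro u humem hueq
      have hker : htilde (g * u⁻¹) = 1 := by
        rw [map_mul, map_inv]
        have heq : htilde u = htilde g := by
          apply Subtype.ext
          rw [hueq, hM]
        rw [heq, mul_inv_cancel]
      have h1 := ker_sub _ hker
      have h2 := Subgroup.mul_mem _ h1 humem
      simpa using h2
    have hs1mem : sigma1 ∈ Subgroup.closure ({sigma1, theta} : Set BraidGroup3) :=
      Subgroup.subset_closure (Or.inl rfl)
    rcases Int.mul_eq_one_iff_eq_one_or_neg_one.mp hdet with ⟨ha, hd⟩ | ⟨ha, hd⟩
    · have hm1 : sigma1 ^ (-(M 0 1)) ∈ Subgroup.closure ({sigma1, theta} : Set BraidGroup3) :=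
        Subgroup.zpow_mem _ hs1mem _
      refine main (sigma1 ^ (-(M 0 1))) hm1 ?_
      rw [htilde_s1_zpow]
      ext i j
      fin_cases i <;> fin_cases j <;> simp [ha, hd, hg0]
    · have hm2 : cc * sigma1 ^ (M 0 1) ∈ Subgroup.closure ({sigma1, theta} : Set BraidGroup3) :=
        Subgroup.mul_mem _ hcmem (Subgroup.zpow_mem _ hs1mem _)
      refine main (cc * sigma1 ^ (M 0 1)) hm2 ?_
      rw [map_mul, Matrix.SpecialLinearGroup.coe_mul, htilde_cc, htilde_s1_zpow]
      ext i j
      fin_cases i <;> fin_cases j <;>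
        simp [ha, hd, hg0, Matrix.mul_apply, Fin.sum_univ_two]
  · -- closure ≤ comap
    rw [Subgroup.closure_le]
    rintro s (rfl | rfl) <;> rw [SetLike.mem_coe, Subgroup.mem_comap, mem_ut]
    · rw [htilde_s1]
      rfl
    · rw [htilde_theta]
      rfl
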